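/- arXiv:1905.11273 — 2 statements merged into one kernel-verified Lean document; each statement's English description precedes it below -/
import Mathlib

section
/- On the generators of the fusion algebra A^f, the double derivations Tr(E₁) and Tr(E₂) satisfy: for t ∈ εAε, Tr(E₁)(t) = te₁⊗e₁ − e₁⊗e₁t and Tr(E₂)(t) = 0; for u ∈ e₂Aε, Tr(E₁)(e₁₂u) = (e₁₂u)e₁⊗e₁ and Tr(E₂)(e₁₂u) = −e₁⊗(e₁₂u); for v ∈ εAe₂, Tr(E₁)(ve₂₁) = −e₁⊗e₁(ve₂₁) and Tr(E₂)(ve₂₁) = (ve₂₁)⊗e₁; for w ∈ e₂Ae₂, Tr(E₁)(e₁₂we₂₁) = 0 and Tr(E₂)(e₁₂we₂₁) = (e₁₂we₂₁)e₁⊗e₁ − e₁⊗e₁(e₁₂we₂₁). In particular, Tr(E₁) + Tr(E₂) = F₁, the gauge element of A^f at e₁. -/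
open TensorProduct

/-- A double bracket on a `k`-algebra `A` (Van den Bergh): a bilinear map
`A × A → A ⊗ A` which is cyclically antisymmetric and a derivation in its second
argument for the outer bimodule structure on `A ⊗ A`. -/
structure DoubleBracket (k A : Type*) [CommRing k] [Ring A] [Algebra k A] where
  br : A →ₗ[k] A →ₗ[k] A ⊗[k] A
  antisymm : ∀ a b : A, br a b = - (TensorProduct.comm k A A) (br b a)
  deriv : ∀ a b c : A,
    br a (b * c) = br a b * ((1 : A) ⊗ₜ[k] c) + (b ⊗ₜ[k] (1 : A)) * br a c

section Core

variable (k : Type*) [CommRing k] (A : Type*) [Ring A] [Algebra k A]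

/-- The cyclic permutation `x ⊗ y ⊗ z ↦ z ⊗ x ⊗ y` on the triple tensor product. -/
noncomputable def cyc3 : A ⊗[k] (A ⊗[k] A) ≃ₗ[k] A ⊗[k] (A ⊗[k] A) :=
  (TensorProduct.assoc k A A A).symm.trans (TensorProduct.comm k (A ⊗[k] A) A)

variable {k A}

/-- Apply a double bracket (as a bilinear map) to the first tensor factor,
`x ⊗ y ↦ ⟪a, x⟫ ⊗ y`. -/
noncomputable def leftExtOf (br : A →ₗ[k] A →ₗ[k] A ⊗[k] A) (a : A) :
    A ⊗[k] A →ₗ[k] A ⊗[k] (A ⊗[k] A) :=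
  (TensorProduct.assoc k A A A).toLinearMap.comp (TensorProduct.map (br a) LinearMap.id)

/-- The triple bracket associated to (the underlying bilinear map of) a double bracket:
`⟪a,b,c⟫ = ⟪a,⟪b,c⟫'⟫ ⊗ ⟪b,c⟫'' + τ(⟪b,⟪c,a⟫'⟫ ⊗ ⟪c,a⟫'') + τ²(⟪c,⟪a,b⟫'⟫ ⊗ ⟪a,b⟫'')`. -/
noncomputable def tripleOf (br : A →ₗ[k] A →ₗ[k] A ⊗[k] A) (a b c : A) :
    A ⊗[k] (A ⊗[k] A) :=
  leftExtOf br a (br b c) + cyc3 k A (leftExtOf br b (br c a))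
    + cyc3 k A (cyc3 k A (leftExtOf br c (br a b)))

/-- The triple bracket associated to a double bracket. -/
noncomputable def DoubleBracket.triple (D : DoubleBracket k A) (a b c : A) :
    A ⊗[k] (A ⊗[k] A) :=
  tripleOf D.br a b c

end Core

/-- A double bracket is quasi-Poisson over the ground field `k` (i.e. with respect to
the trivial idempotent decomposition `1 = 1`). -/
def DoubleBracket.IsQuasiPoisson {k A : Type*} [Field k] [Ring A] [Algebra k A]
    (D : DoubleBracket k A) : Prop :=
  ∀ a b c : A, D.triple a b c = (4⁻¹ : k) •
    ((c * a) ⊗ₜ[k] (b ⊗ₜ[k] (1 : A)) - (c * a) ⊗ₜ[k] ((1 : A) ⊗ₜ[k] b)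
      - c ⊗ₜ[k] ((a * b) ⊗ₜ[k] (1 : A)) + c ⊗ₜ[k] (a ⊗ₜ[k] b)
      - a ⊗ₜ[k] (b ⊗ₜ[k] c) + a ⊗ₜ[k] ((1 : A) ⊗ₜ[k] (b * c))
      + (1 : A) ⊗ₜ[k] ((a * b) ⊗ₜ[k] c) - (1 : A) ⊗ₜ[k] (a ⊗ₜ[k] (b * c)))

section Fusion

variable (k : Type*) [Field k] (A : Type*) [Ring A] [Algebra k A]

/-- Relations presenting the extension algebra `Ā = A *_B B̄`, where `B̄ = Mat₂(k) ⊕ kμ`: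
`Ā` is generated by the elements of `A` together with two new generators `e₁₂, e₂₁`
subject to `e₁₂e₂₁ = e₁`, `e₂₁e₁₂ = e₂`, `e₁e₁₂ = e₁₂ = e₁₂e₂`, `e₂e₂₁ = e₂₁ = e₂₁e₁`. -/
inductive FusionRel (e1 e2 : A) :
    FreeAlgebra k (A ⊕ Fin 2) → FreeAlgebra k (A ⊕ Fin 2) → Prop
  | add (a b : A) : FusionRel e1 e2
      (FreeAlgebra.ι k (Sum.inl a) + FreeAlgebra.ι k (Sum.inl b))
      (FreeAlgebra.ι k (Sum.inl (a + b)))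
  | smul (c : k) (a : A) : FusionRel e1 e2
      (c • FreeAlgebra.ι k (Sum.inl a)) (FreeAlgebra.ι k (Sum.inl (c • a)))
  | mul (a b : A) : FusionRel e1 e2
      (FreeAlgebra.ι k (Sum.inl a) * FreeAlgebra.ι k (Sum.inl b))
      (FreeAlgebra.ι k (Sum.inl (a * b)))
  | one : FusionRel e1 e2 (FreeAlgebra.ι k (Sum.inl 1)) 1
  | mul1221 : FusionRel e1 e2
      (FreeAlgebra.ι k (Sum.inr 0) * FreeAlgebra.ι k (Sum.inr 1))
      (FreeAlgebra.ι k (Sum.inl e1))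
  | mul2112 : FusionRel e1 e2
      (FreeAlgebra.ι k (Sum.inr 1) * FreeAlgebra.ι k (Sum.inr 0))
      (FreeAlgebra.ι k (Sum.inl e2))
  | e1mul12 : FusionRel e1 e2
      (FreeAlgebra.ι k (Sum.inl e1) * FreeAlgebra.ι k (Sum.inr 0))
      (FreeAlgebra.ι k (Sum.inr 0))
  | mul12e2 : FusionRel e1 e2
      (FreeAlgebra.ι k (Sum.inr 0) * FreeAlgebra.ι k (Sum.inl e2))
      (FreeAlgebra.ι k (Sum.inr 0))
  | e2mul21 : FusionRel e1 e2
      (FreeAlgebra.ι k (Sum.inl e2) * FreeAlgebra.ι k (Sum.inr 1))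
      (FreeAlgebra.ι k (Sum.inr 1))
  | mul21e1 : FusionRel e1 e2
      (FreeAlgebra.ι k (Sum.inr 1) * FreeAlgebra.ι k (Sum.inl e1))
      (FreeAlgebra.ι k (Sum.inr 1))

/-- The extension algebra `Ā = A *_B B̄` of `A` along the pair of idempotents
`(e1, e2)`. -/
abbrev ExtAlg (e1 e2 : A) := RingQuot (FusionRel k A e1 e2)

variable (e1 e2 : A)

/-- The canonical map `A → Ā`. -/
noncomputable def extι : A →ₐ[k] ExtAlg k A e1 e2 where
  toFun a := RingQuot.mkAlgHom k (FusionRel k A e1 e2) (FreeAlgebra.ι k (Sum.inl a))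
  map_one' := by
    simpa using RingQuot.mkAlgHom_rel k
      (FusionRel.one (k := k) (A := A) (e1 := e1) (e2 := e2))
  map_mul' a b := by
    have h := RingQuot.mkAlgHom_rel k
      (FusionRel.mul (k := k) (A := A) (e1 := e1) (e2 := e2) a b)
    rw [map_mul] at h
    exact h.symm
  map_zero' := by
    have h := RingQuot.mkAlgHom_rel k
      (FusionRel.smul (k := k) (A := A) (e1 := e1) (e2 := e2) 0 1)
    rw [map_smul, zero_smul, zero_smul] at h
    exact h.symm
  map_add' a b := by
    have h := RingQuot.mkAlgHom_rel k
      (FusionRel.add (k := k) (A := A) (e1 := e1) (e2 := e2) a b)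
    rw [map_add] at h
    exact h.symm
  commutes' c := by
    have h := RingQuot.mkAlgHom_rel k
      (FusionRel.smul (k := k) (A := A) (e1 := e1) (e2 := e2) c 1)
    have h1 : (RingQuot.mkAlgHom k (FusionRel k A e1 e2))
        (FreeAlgebra.ι k (Sum.inl (1 : A))) = 1 := by
      simpa using RingQuot.mkAlgHom_rel k
        (FusionRel.one (k := k) (A := A) (e1 := e1) (e2 := e2))
    rw [map_smul, h1] at h
    rw [Algebra.algebraMap_eq_smul_one, Algebra.algebraMap_eq_smul_one]
    exact h.symm

/-- The matrix unit `e₁₂ ∈ Ā`. -/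
noncomputable def ext12 : ExtAlg k A e1 e2 :=
  RingQuot.mkAlgHom k (FusionRel k A e1 e2) (FreeAlgebra.ι k (Sum.inr 0))

/-- The matrix unit `e₂₁ ∈ Ā`. -/
noncomputable def ext21 : ExtAlg k A e1 e2 :=
  RingQuot.mkAlgHom k (FusionRel k A e1 e2) (FreeAlgebra.ι k (Sum.inr 1))

/-- The idempotent `ε = 1 − e₂ ∈ Ā`; the fusion algebra is the corner
`A^f = ε Ā ε`. -/
noncomputable def extEps : ExtAlg k A e1 e2 := 1 - extι k A e1 e2 e2

variable {k A e1 e2}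

/-- Membership in the fusion algebra `A^f = ε Ā ε ⊆ Ā`. -/
def InCorner (x : ExtAlg k A e1 e2) : Prop :=
  extEps k A e1 e2 * x * extEps k A e1 e2 = x

end Fusion

/-- The data of a double bracket on the corner algebra `A^f = ε Ā ε` (whose unit is
`ε`), recorded as a bilinear map on `Ā`: it is cyclically antisymmetric, satisfies the
derivation rule on corner elements, and takes corner values on corner elements. -/
structure CornerDoubleBracket (k R : Type*) [Field k] [Ring R] [Algebra k R]
    (ε : R) where
  br : R →ₗ[k] R →ₗ[k] R ⊗[k] R
  antisymm : ∀ a b : R, br a b = - (TensorProduct.comm k R R) (br b a)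
  deriv : ∀ a b c : R, ε * a * ε = a → ε * b * ε = b → ε * c * ε = c →
    br a (b * c) = br a b * ((1 : R) ⊗ₜ[k] c) + (b ⊗ₜ[k] (1 : R)) * br a c
  corner_val : ∀ a b : R, ε * a * ε = a → ε * b * ε = b →
    br a b = (ε ⊗ₜ[k] ε) * br a b * (ε ⊗ₜ[k] ε)

section GaugeTr

variable {k : Type*} [Field k] {A : Type*} [Ring A] [Algebra k A] {e1 e2 : A}

/-- The property of being (the extension to `Ā` of) the gauge element `E_s`: a double
derivation of `Ā` vanishing on `B̄` and given on `A` by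
`E_s(a) = a e_s ⊗ e_s − e_s ⊗ e_s a`. -/
structure IsGaugeExt (es : A) (δ : ExtAlg k A e1 e2 →ₗ[k]
    ExtAlg k A e1 e2 ⊗[k] ExtAlg k A e1 e2) : Prop where
  leib : ∀ x y : ExtAlg k A e1 e2,
    δ (x * y) = δ x * ((1 : ExtAlg k A e1 e2) ⊗ₜ[k] y)
      + (x ⊗ₜ[k] (1 : ExtAlg k A e1 e2)) * δ y
  on_A : ∀ a : A, δ (extι k A e1 e2 a) =
    (extι k A e1 e2 (a * es)) ⊗ₜ[k] (extι k A e1 e2 es)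
      - (extι k A e1 e2 es) ⊗ₜ[k] (extι k A e1 e2 (es * a))
  on_e12 : δ (ext12 k A e1 e2) = 0
  on_e21 : δ (ext21 k A e1 e2) = 0

/-- The trace map on double derivations:
`Tr(δ)(a) = δ(a)'ε ⊗ εδ(a)'' + δ(a)'e₂₁ε ⊗ εe₁₂δ(a)''`. -/
noncomputable def TrOf (δ : ExtAlg k A e1 e2 →ₗ[k]
    ExtAlg k A e1 e2 ⊗[k] ExtAlg k A e1 e2) :
    ExtAlg k A e1 e2 →ₗ[k] ExtAlg k A e1 e2 ⊗[k] ExtAlg k A e1 e2 :=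
  (TensorProduct.map (LinearMap.mulRight k (extEps k A e1 e2))
      (LinearMap.mulLeft k (extEps k A e1 e2))).comp δ
    + (TensorProduct.map
        (LinearMap.mulRight k (ext21 k A e1 e2 * extEps k A e1 e2))
        (LinearMap.mulLeft k (extEps k A e1 e2 * ext12 k A e1 e2))).comp δ

end GaugeTr

section Stmt10Aux

variable {k : Type*} [Field k] {A : Type*} [Ring A] [Algebra k A] (e1 e2 : A)

lemma extι_mul' (a b : A) :
    extι k A e1 e2 a * extι k A e1 e2 b = extι k A e1 e2 (a * b) :=
  (map_mul _ _ _).symm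

lemma fus_r1 : ext12 k A e1 e2 * ext21 k A e1 e2 = extι k A e1 e2 e1 := by
  have h := RingQuot.mkAlgHom_rel k
    (FusionRel.mul1221 (k := k) (A := A) (e1 := e1) (e2 := e2))
  rw [map_mul] at h
  exact h

lemma fus_r2 : ext21 k A e1 e2 * ext12 k A e1 e2 = extι k A e1 e2 e2 := by
  have h := RingQuot.mkAlgHom_rel k
    (FusionRel.mul2112 (k := k) (A := A) (e1 := e1) (e2 := e2))
  rw [map_mul] at h
  exact h

lemma fus_r3 : extι k A e1 e2 e1 * ext12 k A e1 e2 = ext12 k A e1 e2 := by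
  have h := RingQuot.mkAlgHom_rel k
    (FusionRel.e1mul12 (k := k) (A := A) (e1 := e1) (e2 := e2))
  rw [map_mul] at h
  exact h

lemma fus_r4 : ext12 k A e1 e2 * extι k A e1 e2 e2 = ext12 k A e1 e2 := by
  have h := RingQuot.mkAlgHom_rel k
    (FusionRel.mul12e2 (k := k) (A := A) (e1 := e1) (e2 := e2))
  rw [map_mul] at h
  exact h

lemma fus_r5 : extι k A e1 e2 e2 * ext21 k A e1 e2 = ext21 k A e1 e2 := by
  have h := RingQuot.mkAlgHom_rel k
    (FusionRel.e2mul21 (k := k) (A := A) (e1 := e1) (e2 := e2))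
  rw [map_mul] at h
  exact h

lemma fus_r6 : ext21 k A e1 e2 * extι k A e1 e2 e1 = ext21 k A e1 e2 := by
  have h := RingQuot.mkAlgHom_rel k
    (FusionRel.mul21e1 (k := k) (A := A) (e1 := e1) (e2 := e2))
  rw [map_mul] at h
  exact h

variable {e1 e2}

lemma fus_e12_ιmul (h21 : e2 * e1 = 0) (a : A) :
    ext12 k A e1 e2 * extι k A e1 e2 (e1 * a) = 0 := by
  rw [← fus_r4, mul_assoc, extι_mul', ← mul_assoc, h21, zero_mul, map_zero,
    mul_zero]

lemma fus_ιmul_e21 (h12 : e1 * e2 = 0) (a : A) :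
    extι k A e1 e2 (a * e1) * ext21 k A e1 e2 = 0 := by
  rw [← fus_r5, ← mul_assoc, extι_mul', mul_assoc, h12, mul_zero, map_zero,
    zero_mul]

lemma fus_ι2_e12 (h21 : e2 * e1 = 0) :
    extι k A e1 e2 e2 * ext12 k A e1 e2 = 0 := by
  rw [← fus_r3, ← mul_assoc, extι_mul', h21, map_zero, zero_mul]

lemma fus_e21_ι2 (h12 : e1 * e2 = 0) :
    ext21 k A e1 e2 * extι k A e1 e2 e2 = 0 := by
  rw [← fus_r6, mul_assoc, extι_mul', h12, map_zero, mul_zero]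

lemma fus_eps_e12 (h21 : e2 * e1 = 0) :
    extEps k A e1 e2 * ext12 k A e1 e2 = ext12 k A e1 e2 := by
  rw [extEps, sub_mul, one_mul, fus_ι2_e12 h21, sub_zero]

lemma fus_e21_eps (h12 : e1 * e2 = 0) :
    ext21 k A e1 e2 * extEps k A e1 e2 = ext21 k A e1 e2 := by
  rw [extEps, mul_sub, mul_one, fus_e21_ι2 h12, sub_zero]

lemma fus_eps_ι1 (h21 : e2 * e1 = 0) :
    extEps k A e1 e2 * extι k A e1 e2 e1 = extι k A e1 e2 e1 := by
  rw [extEps, sub_mul, one_mul, extι_mul', h21, map_zero, sub_zero]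

lemma fus_e12_ι1 (h21 : e2 * e1 = 0) :
    ext12 k A e1 e2 * extι k A e1 e2 e1 = 0 := by
  rw [← fus_r4, mul_assoc, extι_mul', h21, map_zero, mul_zero]

lemma fus_ι1_e21 (h12 : e1 * e2 = 0) :
    extι k A e1 e2 e1 * ext21 k A e1 e2 = 0 := by
  rw [← fus_r5, ← mul_assoc, extι_mul', h12, map_zero, zero_mul]

lemma fus_e12_eps : ext12 k A e1 e2 * extEps k A e1 e2 = 0 := by
  rw [extEps, mul_sub, mul_one, fus_r4, sub_self]

lemma fus_eps_e21 : extEps k A e1 e2 * ext21 k A e1 e2 = 0 := by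
  rw [extEps, sub_mul, one_mul, fus_r5, sub_self]

lemma fus_ι1_eps (h12 : e1 * e2 = 0) :
    extι k A e1 e2 e1 * extEps k A e1 e2 = extι k A e1 e2 e1 := by
  rw [extEps, mul_sub, mul_one, extι_mul', h12, map_zero, sub_zero]

lemma fus_eps_ι2 (he2 : e2 * e2 = e2) :
    extEps k A e1 e2 * extι k A e1 e2 e2 = 0 := by
  rw [extEps, sub_mul, one_mul, extι_mul', he2, sub_self]

lemma fus_ι2_eps (he2 : e2 * e2 = e2) :
    extι k A e1 e2 e2 * extEps k A e1 e2 = 0 := by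
  rw [extEps, mul_sub, mul_one, extι_mul', he2, sub_self]

lemma fus_ι_eps (a : A) (ha : a * e2 = 0) :
    extι k A e1 e2 a * extEps k A e1 e2 = extι k A e1 e2 a := by
  rw [extEps, mul_sub, mul_one, extι_mul', ha, map_zero, sub_zero]

lemma fus_eps_ι (a : A) (ha : e2 * a = 0) :
    extEps k A e1 e2 * extι k A e1 e2 a = extι k A e1 e2 a := by
  rw [extEps, sub_mul, one_mul, extι_mul', ha, map_zero, sub_zero]

/-- `TrOf` applied, with the simplifications `E21 * ε = E21`, `ε * E12 = E12`. -/
lemma TrOf_apply' (h12 : e1 * e2 = 0) (h21 : e2 * e1 = 0)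
    (δ : ExtAlg k A e1 e2 →ₗ[k] ExtAlg k A e1 e2 ⊗[k] ExtAlg k A e1 e2)
    (x : ExtAlg k A e1 e2) :
    TrOf δ x =
      TensorProduct.map (LinearMap.mulRight k (extEps k A e1 e2))
        (LinearMap.mulLeft k (extEps k A e1 e2)) (δ x)
      + TensorProduct.map (LinearMap.mulRight k (ext21 k A e1 e2))
        (LinearMap.mulLeft k (ext12 k A e1 e2)) (δ x) := by
  rw [TrOf, LinearMap.add_apply, LinearMap.comp_apply, LinearMap.comp_apply,
    fus_e21_eps h12, fus_eps_e12 h21]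

section TrComp

lemma tens_mul_sub (a b c : ExtAlg k A e1 e2 ⊗[k] ExtAlg k A e1 e2) :
    a * (b - c) = a * b - a * c := mul_sub a b c

lemma tens_sub_mul (a b c : ExtAlg k A e1 e2 ⊗[k] ExtAlg k A e1 e2) :
    (a - b) * c = a * c - b * c := sub_mul a b c

lemma tens_sub_zero (a : ExtAlg k A e1 e2 ⊗[k] ExtAlg k A e1 e2) : a - 0 = a := sub_zero a

lemma tens_zero_sub (a : ExtAlg k A e1 e2 ⊗[k] ExtAlg k A e1 e2) : 0 - a = -a := zero_sub a

lemma tens_neg_zero : -(0 : ExtAlg k A e1 e2 ⊗[k] ExtAlg k A e1 e2) = 0 :=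
  (tens_zero_sub 0).symm.trans (sub_self (0 : ExtAlg k A e1 e2 ⊗[k] ExtAlg k A e1 e2))

lemma tens_sub_self (a : ExtAlg k A e1 e2 ⊗[k] ExtAlg k A e1 e2) : a - a = 0 := sub_self a

lemma tens_neg_add_cancel (a : ExtAlg k A e1 e2 ⊗[k] ExtAlg k A e1 e2) : -a + a = 0 :=
  neg_add_cancel a

lemma tens_map_neg (f : ExtAlg k A e1 e2 ⊗[k] ExtAlg k A e1 e2 →ₗ[k]
    ExtAlg k A e1 e2 ⊗[k] ExtAlg k A e1 e2) (a : ExtAlg k A e1 e2 ⊗[k] ExtAlg k A e1 e2) :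
    f (-a) = -f a := map_neg f a

lemma tens_left_eq_add (a b : ExtAlg k A e1 e2 ⊗[k] ExtAlg k A e1 e2) (h : a = a + b) :
    b = 0 :=
  calc b = a + b - a := (add_sub_cancel_left a b).symm
    _ = a - a := congrArg (· - a) h.symm
    _ = 0 := sub_self a

variable {δ E1 E2 : ExtAlg k A e1 e2 →ₗ[k] ExtAlg k A e1 e2 ⊗[k] ExtAlg k A e1 e2}

/-- A double derivation kills `1`. -/
lemma gauge_one (hδ : ∀ x y : ExtAlg k A e1 e2,
    δ (x * y) = δ x * ((1 : ExtAlg k A e1 e2) ⊗ₜ[k] y)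
      + (x ⊗ₜ[k] (1 : ExtAlg k A e1 e2)) * δ y) : δ 1 = 0 := by
  have h := hδ 1 1
  rw [one_mul, ← Algebra.TensorProduct.one_def, mul_one, one_mul] at h
  exact tens_left_eq_add _ _ h

lemma map_mul_oneTmul (c d y : ExtAlg k A e1 e2) (t : ExtAlg k A e1 e2 ⊗[k] ExtAlg k A e1 e2) :
    TensorProduct.map (LinearMap.mulRight k c) (LinearMap.mulLeft k d)
      (t * ((1 : ExtAlg k A e1 e2) ⊗ₜ[k] y)) =
    TensorProduct.map (LinearMap.mulRight k c) (LinearMap.mulLeft k d) t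
      * ((1 : ExtAlg k A e1 e2) ⊗ₜ[k] y) := by
  induction t using TensorProduct.induction_on with
  | zero => simp
  | tmul u v =>
      simp [Algebra.TensorProduct.tmul_mul_tmul, mul_assoc]
  | add s t hs ht => rw [add_mul, map_add, hs, ht, map_add, add_mul]

lemma map_tmulOne_mul (c d x : ExtAlg k A e1 e2) (t : ExtAlg k A e1 e2 ⊗[k] ExtAlg k A e1 e2) :
    TensorProduct.map (LinearMap.mulRight k c) (LinearMap.mulLeft k d)
      ((x ⊗ₜ[k] (1 : ExtAlg k A e1 e2)) * t) =
    (x ⊗ₜ[k] (1 : ExtAlg k A e1 e2))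
      * TensorProduct.map (LinearMap.mulRight k c) (LinearMap.mulLeft k d) t := by
  induction t using TensorProduct.induction_on with
  | zero => simp
  | tmul u v =>
      simp [Algebra.TensorProduct.tmul_mul_tmul, mul_assoc]
  | add s t hs ht => rw [mul_add, map_add, hs, ht, map_add, mul_add]

/-- `TrOf δ` satisfies the Leibniz rule whenever `δ` does. -/
lemma TrOf_leib (hδ : ∀ x y : ExtAlg k A e1 e2,
    δ (x * y) = δ x * ((1 : ExtAlg k A e1 e2) ⊗ₜ[k] y)
      + (x ⊗ₜ[k] (1 : ExtAlg k A e1 e2)) * δ y) (x y : ExtAlg k A e1 e2) :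
    TrOf δ (x * y) = TrOf δ x * ((1 : ExtAlg k A e1 e2) ⊗ₜ[k] y)
      + (x ⊗ₜ[k] (1 : ExtAlg k A e1 e2)) * TrOf δ y := by
  simp only [TrOf, LinearMap.add_apply, LinearMap.comp_apply, hδ x y, map_add,
    map_mul_oneTmul, map_tmulOne_mul, add_mul, mul_add]
  abel

end TrComp

section TrVals

variable (h12 : e1 * e2 = 0) (h21 : e2 * e1 = 0) (he2 : e2 * e2 = e2)
variable {E1 E2 : ExtAlg k A e1 e2 →ₗ[k] ExtAlg k A e1 e2 ⊗[k] ExtAlg k A e1 e2}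
variable (hE1 : IsGaugeExt e1 E1) (hE2 : IsGaugeExt e2 E2)

include h12 h21 hE1 in
/-- Value of `Tr E₁` on `ι a` for arbitrary `a ∈ A`. -/
lemma trE1_on_ι (a : A) :
    TrOf E1 (extι k A e1 e2 a) =
      (extι k A e1 e2 a * extι k A e1 e2 e1) ⊗ₜ[k] extι k A e1 e2 e1
        - extι k A e1 e2 e1 ⊗ₜ[k] (extι k A e1 e2 e1 * extι k A e1 e2 a) := by
  have ha1 : (a * e1) * e2 = 0 := by rw [mul_assoc, h12, mul_zero]
  have h1a : e2 * (e1 * a) = 0 := by rw [← mul_assoc, h21, zero_mul]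
  rw [TrOf_apply' h12 h21, hE1.on_A a, map_sub, map_sub,
    TensorProduct.map_tmul, TensorProduct.map_tmul, TensorProduct.map_tmul,
    TensorProduct.map_tmul]
  simp only [LinearMap.mulRight_apply, LinearMap.mulLeft_apply]
  rw [fus_ι_eps _ ha1, fus_eps_ι1 h21, fus_ι1_eps h12, fus_eps_ι _ h1a,
    fus_ιmul_e21 h12, fus_e12_ι1 h21, fus_e12_ιmul h21, fus_ι1_e21 h12,
    extι_mul', extι_mul']
  simp

include h12 h21 he2 hE2 in
/-- Value of `Tr E₂` on `ι a` for arbitrary `a ∈ A`. -/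
lemma trE2_on_ι (a : A) :
    TrOf E2 (extι k A e1 e2 a) =
      (extι k A e1 e2 a * ext21 k A e1 e2) ⊗ₜ[k] ext12 k A e1 e2
        - ext21 k A e1 e2 ⊗ₜ[k] (ext12 k A e1 e2 * extι k A e1 e2 a) := by
  rw [TrOf_apply' h12 h21, hE2.on_A a, map_sub, map_sub,
    TensorProduct.map_tmul, TensorProduct.map_tmul, TensorProduct.map_tmul,
    TensorProduct.map_tmul]
  simp only [LinearMap.mulRight_apply, LinearMap.mulLeft_apply]
  rw [fus_eps_ι2 he2, fus_ι2_eps he2]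
  rw [show extι k A e1 e2 (a * e2) * ext21 k A e1 e2
        = extι k A e1 e2 a * ext21 k A e1 e2 by
      rw [← extι_mul', mul_assoc, fus_r5],
    show ext12 k A e1 e2 * extι k A e1 e2 (e2 * a)
        = ext12 k A e1 e2 * extι k A e1 e2 a by
      rw [← extι_mul', ← mul_assoc, fus_r4],
    fus_r4, fus_r5]
  simp

include h12 h21 hE1 in
/-- Value of `Tr E₁` on `e₁₂ · ι u` for arbitrary `u ∈ A`. -/
lemma trE1_on_12ι (u : A) :
    TrOf E1 (ext12 k A e1 e2 * extι k A e1 e2 u) =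
      (ext12 k A e1 e2 * extι k A e1 e2 u * extι k A e1 e2 e1) ⊗ₜ[k]
        extι k A e1 e2 e1 := by
  have hx : E1 (ext12 k A e1 e2 * extι k A e1 e2 u) =
      (ext12 k A e1 e2 * extι k A e1 e2 (u * e1)) ⊗ₜ[k] extι k A e1 e2 e1 := by
    rw [hE1.leib, hE1.on_e12, zero_mul, zero_add, hE1.on_A, tens_mul_sub,
      Algebra.TensorProduct.tmul_mul_tmul, Algebra.TensorProduct.tmul_mul_tmul,
      one_mul, one_mul, fus_e12_ι1 h21, zero_tmul, tens_sub_zero]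
  rw [TrOf_apply' h12 h21, hx, TensorProduct.map_tmul, TensorProduct.map_tmul]
  simp only [LinearMap.mulRight_apply, LinearMap.mulLeft_apply]
  rw [mul_assoc, fus_ι_eps _ (by rw [mul_assoc, h12, mul_zero]),
    fus_eps_ι1 h21, mul_assoc, fus_ιmul_e21 h12, mul_zero, fus_e12_ι1 h21,
    tmul_zero, add_zero, ← extι_mul', ← mul_assoc]

include h12 h21 hE2 in
/-- Value of `Tr E₂` on `e₁₂ · ι u` for `u ∈ e₂A(1-e₂)`. -/
lemma trE2_on_12ι (u : A) (hu2 : u * e2 = 0) (h2u : e2 * u = u) :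
    TrOf E2 (ext12 k A e1 e2 * extι k A e1 e2 u) =
      - extι k A e1 e2 e1 ⊗ₜ[k] (ext12 k A e1 e2 * extι k A e1 e2 u) := by
  have hx : E2 (ext12 k A e1 e2 * extι k A e1 e2 u) =
      - ext12 k A e1 e2 ⊗ₜ[k] extι k A e1 e2 u := by
    rw [hE2.leib, hE2.on_e12, zero_mul, zero_add, hE2.on_A, tens_mul_sub,
      Algebra.TensorProduct.tmul_mul_tmul, Algebra.TensorProduct.tmul_mul_tmul,
      one_mul, one_mul, hu2, map_zero, mul_zero, zero_tmul, tens_zero_sub, h2u,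
      fus_r4]
  rw [TrOf_apply' h12 h21, hx, tens_map_neg, tens_map_neg, TensorProduct.map_tmul,
    TensorProduct.map_tmul]
  simp only [LinearMap.mulRight_apply, LinearMap.mulLeft_apply]
  rw [fus_e12_eps, zero_tmul, tens_neg_zero, zero_add, fus_r1]

include h12 h21 hE1 in
/-- Value of `Tr E₁` on `ι v · e₂₁` for arbitrary `v ∈ A`. -/
lemma trE1_on_ι21 (v : A) :
    TrOf E1 (extι k A e1 e2 v * ext21 k A e1 e2) =
      - extι k A e1 e2 e1 ⊗ₜ[k]
        (extι k A e1 e2 e1 * (extι k A e1 e2 v * ext21 k A e1 e2)) := by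
  have hx : E1 (extι k A e1 e2 v * ext21 k A e1 e2) =
      - extι k A e1 e2 e1 ⊗ₜ[k] (extι k A e1 e2 (e1 * v) * ext21 k A e1 e2) := by
    rw [hE1.leib, hE1.on_e21, mul_zero, add_zero, hE1.on_A, tens_sub_mul,
      Algebra.TensorProduct.tmul_mul_tmul, Algebra.TensorProduct.tmul_mul_tmul,
      mul_one, mul_one, fus_ι1_e21 h12, tmul_zero, tens_zero_sub]
  rw [TrOf_apply' h12 h21, hx, tens_map_neg, tens_map_neg, TensorProduct.map_tmul,
    TensorProduct.map_tmul]
  simp only [LinearMap.mulRight_apply, LinearMap.mulLeft_apply]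
  rw [fus_ι1_eps h12, ← mul_assoc, fus_eps_ι _ (by rw [← mul_assoc, h21, zero_mul]),
    fus_ι1_e21 h12, zero_tmul, tens_neg_zero, add_zero, ← mul_assoc, extι_mul']

include h12 h21 hE2 in
/-- Value of `Tr E₂` on `ι v · e₂₁` for `v ∈ (1-e₂)Ae₂`. -/
lemma trE2_on_ι21 (v : A) (hv2 : v * e2 = v) (h2v : e2 * v = 0) :
    TrOf E2 (extι k A e1 e2 v * ext21 k A e1 e2) =
      (extι k A e1 e2 v * ext21 k A e1 e2) ⊗ₜ[k] extι k A e1 e2 e1 := by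
  have hx : E2 (extι k A e1 e2 v * ext21 k A e1 e2) =
      extι k A e1 e2 v ⊗ₜ[k] ext21 k A e1 e2 := by
    rw [hE2.leib, hE2.on_e21, mul_zero, add_zero, hE2.on_A, tens_sub_mul,
      Algebra.TensorProduct.tmul_mul_tmul, Algebra.TensorProduct.tmul_mul_tmul,
      mul_one, mul_one, h2v, map_zero, zero_mul, tmul_zero, tens_sub_zero, hv2,
      fus_r5]
  rw [TrOf_apply' h12 h21, hx, TensorProduct.map_tmul, TensorProduct.map_tmul]
  simp only [LinearMap.mulRight_apply, LinearMap.mulLeft_apply]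
  rw [fus_eps_e21, tmul_zero, zero_add, fus_r1]

include h12 h21 hE1 in
/-- Value of `Tr E₁` on `e₁₂ · ι w · e₂₁` for `w` with `w e₁ = 0`. -/
lemma trE1_on_12ι21 (w : A) (hw1 : w * e1 = 0) :
    TrOf E1 (ext12 k A e1 e2 * extι k A e1 e2 w * ext21 k A e1 e2) = 0 := by
  have hx : E1 (ext12 k A e1 e2 * extι k A e1 e2 w * ext21 k A e1 e2) = 0 := by
    rw [hE1.leib, hE1.on_e21, mul_zero, add_zero, hE1.leib, hE1.on_e12,
      zero_mul, zero_add, hE1.on_A, tens_mul_sub,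
      Algebra.TensorProduct.tmul_mul_tmul, Algebra.TensorProduct.tmul_mul_tmul,
      one_mul, one_mul, hw1, map_zero, mul_zero, zero_tmul, tens_zero_sub,
      fus_e12_ι1 h21, zero_tmul, tens_neg_zero, zero_mul]
  rw [TrOf_apply' h12 h21, hx, map_zero, map_zero, add_zero]

include h12 h21 hE2 in
/-- Value of `Tr E₂` on `e₁₂ · ι w · e₂₁` for `w ∈ e₂Ae₂`. -/
lemma trE2_on_12ι21 (w : A) (hw2 : w * e2 = w) (h2w : e2 * w = w) :
    TrOf E2 (ext12 k A e1 e2 * extι k A e1 e2 w * ext21 k A e1 e2) =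
      (ext12 k A e1 e2 * extι k A e1 e2 w * ext21 k A e1 e2 * extι k A e1 e2 e1)
          ⊗ₜ[k] extι k A e1 e2 e1
        - extι k A e1 e2 e1 ⊗ₜ[k]
          (extι k A e1 e2 e1 *
            (ext12 k A e1 e2 * extι k A e1 e2 w * ext21 k A e1 e2)) := by
  have hx : E2 (ext12 k A e1 e2 * extι k A e1 e2 w * ext21 k A e1 e2) =
      (ext12 k A e1 e2 * extι k A e1 e2 w) ⊗ₜ[k] ext21 k A e1 e2
        - ext12 k A e1 e2 ⊗ₜ[k] (extι k A e1 e2 w * ext21 k A e1 e2) := by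
    rw [hE2.leib, hE2.on_e21, mul_zero, add_zero, hE2.leib, hE2.on_e12,
      zero_mul, zero_add, hE2.on_A, tens_mul_sub,
      Algebra.TensorProduct.tmul_mul_tmul, Algebra.TensorProduct.tmul_mul_tmul,
      one_mul, one_mul, hw2, h2w, fus_r4, tens_sub_mul,
      Algebra.TensorProduct.tmul_mul_tmul, Algebra.TensorProduct.tmul_mul_tmul,
      mul_one, mul_one, fus_r5]
  rw [TrOf_apply' h12 h21, hx, map_sub, map_sub, TensorProduct.map_tmul,
    TensorProduct.map_tmul, TensorProduct.map_tmul, TensorProduct.map_tmul]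
  simp only [LinearMap.mulRight_apply, LinearMap.mulLeft_apply]
  rw [fus_eps_e21, tmul_zero, fus_e12_eps, zero_tmul, tens_sub_zero, zero_add,
    fus_r1]
  have hxe : ext12 k A e1 e2 * extι k A e1 e2 w * ext21 k A e1 e2
      * extι k A e1 e2 e1
      = ext12 k A e1 e2 * extι k A e1 e2 w * ext21 k A e1 e2 := by
    rw [mul_assoc (ext12 k A e1 e2 * extι k A e1 e2 w), fus_r6]
  have hex : extι k A e1 e2 e1
        * (ext12 k A e1 e2 * extι k A e1 e2 w * ext21 k A e1 e2)
      = ext12 k A e1 e2 * extι k A e1 e2 w * ext21 k A e1 e2 := by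
    rw [← mul_assoc, ← mul_assoc, fus_r3]
  rw [hxe, hex]
  congr 1
  rw [← mul_assoc]

/-- `TrOf δ` kills `1` whenever `δ` does. -/
lemma TrOf_one {δ : ExtAlg k A e1 e2 →ₗ[k] ExtAlg k A e1 e2 ⊗[k] ExtAlg k A e1 e2}
    (h : δ 1 = 0) : TrOf δ 1 = 0 := by
  simp [TrOf, h]

set_option maxHeartbeats 1000000 in
include h12 h21 he2 hE1 hE2 in
/-- The key global identity on `Ā`:
`Tr(E₁) + Tr(E₂) = F₁ + (inner double derivation attached to e₂₁ ⊗ e₁₂)`. -/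
lemma tr_sum_global (z : ExtAlg k A e1 e2) :
    TrOf E1 z + TrOf E2 z =
      (z * extι k A e1 e2 e1) ⊗ₜ[k] extι k A e1 e2 e1
        - extι k A e1 e2 e1 ⊗ₜ[k] (extι k A e1 e2 e1 * z)
        + (z * ext21 k A e1 e2) ⊗ₜ[k] ext12 k A e1 e2
        - ext21 k A e1 e2 ⊗ₜ[k] (ext12 k A e1 e2 * z) := by
  obtain ⟨y, rfl⟩ := RingQuot.mkAlgHom_surjective k (FusionRel k A e1 e2) z
  induction y using FreeAlgebra.induction with
  | grade0 r =>
      rw [AlgHom.commutes, Algebra.algebraMap_eq_smul_one, map_smul, map_smul,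
        TrOf_one (gauge_one hE1.leib), TrOf_one (gauge_one hE2.leib),
        smul_zero, add_zero]
      simp only [smul_mul_assoc, one_mul, mul_smul_comm, mul_one,
        TensorProduct.smul_tmul', TensorProduct.tmul_smul]
      rw [sub_self, zero_add, sub_self]
  | grade1 x =>
      rcases x with a | j
      · show TrOf E1 (extι k A e1 e2 a) + TrOf E2 (extι k A e1 e2 a) = _
        rw [trE1_on_ι h12 h21 hE1 a, trE2_on_ι h12 h21 he2 hE2 a]
        abel
      · fin_cases j
        · have key : TrOf E1 (ext12 k A e1 e2) + TrOf E2 (ext12 k A e1 e2) =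
              (ext12 k A e1 e2 * extι k A e1 e2 e1) ⊗ₜ[k] extι k A e1 e2 e1
                - extι k A e1 e2 e1 ⊗ₜ[k]
                  (extι k A e1 e2 e1 * ext12 k A e1 e2)
                + (ext12 k A e1 e2 * ext21 k A e1 e2) ⊗ₜ[k] ext12 k A e1 e2
                - ext21 k A e1 e2 ⊗ₜ[k]
                  (ext12 k A e1 e2 * ext12 k A e1 e2) := ?_
          · exact key
          rw [TrOf_apply' h12 h21, TrOf_apply' h12 h21, hE1.on_e12,
            hE2.on_e12]
          simp only [map_zero, add_zero, zero_add]
          have h1212 : ext12 k A e1 e2 * ext12 k A e1 e2 = 0 := by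
            calc ext12 k A e1 e2 * ext12 k A e1 e2
                = ext12 k A e1 e2 * (extι k A e1 e2 e1 * ext12 k A e1 e2) := by
                  rw [fus_r3]
              _ = (ext12 k A e1 e2 * extι k A e1 e2 e1) * ext12 k A e1 e2 := by
                  rw [mul_assoc]
              _ = 0 := by rw [fus_e12_ι1 h21, zero_mul]
          rw [fus_e12_ι1 h21, fus_r3, fus_r1, h1212, zero_tmul, tmul_zero,
            tens_zero_sub, tens_sub_zero, tens_neg_add_cancel]
        · have key : TrOf E1 (ext21 k A e1 e2) + TrOf E2 (ext21 k A e1 e2) =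
              (ext21 k A e1 e2 * extι k A e1 e2 e1) ⊗ₜ[k] extι k A e1 e2 e1
                - extι k A e1 e2 e1 ⊗ₜ[k]
                  (extι k A e1 e2 e1 * ext21 k A e1 e2)
                + (ext21 k A e1 e2 * ext21 k A e1 e2) ⊗ₜ[k] ext12 k A e1 e2
                - ext21 k A e1 e2 ⊗ₜ[k]
                  (ext12 k A e1 e2 * ext21 k A e1 e2) := ?_
          · exact key
          rw [TrOf_apply' h12 h21, TrOf_apply' h12 h21, hE1.on_e21,
            hE2.on_e21]
          simp only [map_zero, add_zero, zero_add]
          have h2121 : ext21 k A e1 e2 * ext21 k A e1 e2 = 0 := by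
            calc ext21 k A e1 e2 * ext21 k A e1 e2
                = ext21 k A e1 e2 * (extι k A e1 e2 e2 * ext21 k A e1 e2) := by
                  rw [fus_r5]
              _ = (ext21 k A e1 e2 * extι k A e1 e2 e2) * ext21 k A e1 e2 := by
                  rw [mul_assoc]
              _ = 0 := by rw [fus_e21_ι2 h12, zero_mul]
          rw [fus_r6, fus_ι1_e21 h12, fus_r1, h2121, tmul_zero, zero_tmul,
            tens_sub_zero, add_zero, tens_sub_self]
  | mul a b ha hb =>
      rw [map_mul, TrOf_leib hE1.leib, TrOf_leib hE2.leib]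
      have key : ∀ X Y : ExtAlg k A e1 e2,
          ((X * extι k A e1 e2 e1) ⊗ₜ[k] extι k A e1 e2 e1
            - extι k A e1 e2 e1 ⊗ₜ[k] (extι k A e1 e2 e1 * X)
            + (X * ext21 k A e1 e2) ⊗ₜ[k] ext12 k A e1 e2
            - ext21 k A e1 e2 ⊗ₜ[k] (ext12 k A e1 e2 * X))
              * ((1 : ExtAlg k A e1 e2) ⊗ₜ[k] Y)
          + (X ⊗ₜ[k] (1 : ExtAlg k A e1 e2))
            * ((Y * extι k A e1 e2 e1) ⊗ₜ[k] extι k A e1 e2 e1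
              - extι k A e1 e2 e1 ⊗ₜ[k] (extι k A e1 e2 e1 * Y)
              + (Y * ext21 k A e1 e2) ⊗ₜ[k] ext12 k A e1 e2
              - ext21 k A e1 e2 ⊗ₜ[k] (ext12 k A e1 e2 * Y))
          = (X * Y * extι k A e1 e2 e1) ⊗ₜ[k] extι k A e1 e2 e1
            - extι k A e1 e2 e1 ⊗ₜ[k] (extι k A e1 e2 e1 * (X * Y))
            + (X * Y * ext21 k A e1 e2) ⊗ₜ[k] ext12 k A e1 e2
            - ext21 k A e1 e2 ⊗ₜ[k] (ext12 k A e1 e2 * (X * Y)) := by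
        intro X Y
        simp only [tens_sub_mul, add_mul, tens_mul_sub, mul_add,
          Algebra.TensorProduct.tmul_mul_tmul, one_mul, mul_one, mul_assoc]
        abel
      rw [show ∀ p q r s : ExtAlg k A e1 e2 ⊗[k] ExtAlg k A e1 e2,
            p + q + (r + s) = p + r + (q + s) from fun _ _ _ _ => by abel,
        ← add_mul, ← mul_add, ha, hb]
      exact key _ _
  | add a b ha hb =>
      rw [map_add, map_add, map_add,
        show ∀ p q r s : ExtAlg k A e1 e2 ⊗[k] ExtAlg k A e1 e2,
            p + q + (r + s) = p + r + (q + s) from fun _ _ _ _ => by abel,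
        ha, hb]
      simp only [add_mul, mul_add, TensorProduct.add_tmul,
        TensorProduct.tmul_add]
      abel

end TrVals

end Stmt10Aux

/-- Values of `Tr(E₁)` and `Tr(E₂)` on the four types of generators of
the fusion algebra `A^f`, and the identity `Tr(E₁) + Tr(E₂) = F₁` on `A^f`. -/
theorem statement10 (k : Type*) [Field k] [CharZero k]
    (A : Type*) [Ring A] [Algebra k A]
    (I : Type*) [Fintype I] [DecidableEq I] (e : I → A)
    (horth : ∀ s t : I, e s * e t = if s = t then e s else 0)
    (hsum : ∑ s : I, e s = 1)
    (i1 i2 : I) (h12 : i1 ≠ i2)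
    (E1 E2 : ExtAlg k A (e i1) (e i2) →ₗ[k]
      ExtAlg k A (e i1) (e i2) ⊗[k] ExtAlg k A (e i1) (e i2))
    (hE1 : IsGaugeExt (e i1) E1) (hE2 : IsGaugeExt (e i2) E2) :
    (∀ t : A, (1 - e i2) * t * (1 - e i2) = t →
      TrOf E1 (extι k A (e i1) (e i2) t) =
        (extι k A (e i1) (e i2) t * extι k A (e i1) (e i2) (e i1)) ⊗ₜ[k]
            (extι k A (e i1) (e i2) (e i1))
          - (extι k A (e i1) (e i2) (e i1)) ⊗ₜ[k]
            (extι k A (e i1) (e i2) (e i1) * extι k A (e i1) (e i2) t) ∧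
      TrOf E2 (extι k A (e i1) (e i2) t) = 0) ∧
    (∀ u : A, e i2 * u * (1 - e i2) = u →
      TrOf E1 (ext12 k A (e i1) (e i2) * extι k A (e i1) (e i2) u) =
        ((ext12 k A (e i1) (e i2) * extι k A (e i1) (e i2) u) *
            extι k A (e i1) (e i2) (e i1)) ⊗ₜ[k] (extι k A (e i1) (e i2) (e i1)) ∧
      TrOf E2 (ext12 k A (e i1) (e i2) * extι k A (e i1) (e i2) u) =
        - (extι k A (e i1) (e i2) (e i1)) ⊗ₜ[k]
            (ext12 k A (e i1) (e i2) * extι k A (e i1) (e i2) u)) ∧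
    (∀ v : A, (1 - e i2) * v * e i2 = v →
      TrOf E1 (extι k A (e i1) (e i2) v * ext21 k A (e i1) (e i2)) =
        - (extι k A (e i1) (e i2) (e i1)) ⊗ₜ[k]
            (extι k A (e i1) (e i2) (e i1) *
              (extι k A (e i1) (e i2) v * ext21 k A (e i1) (e i2))) ∧
      TrOf E2 (extι k A (e i1) (e i2) v * ext21 k A (e i1) (e i2)) =
        (extι k A (e i1) (e i2) v * ext21 k A (e i1) (e i2)) ⊗ₜ[k]
          (extι k A (e i1) (e i2) (e i1))) ∧
    (∀ w : A, e i2 * w * e i2 = w →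
      TrOf E1 (ext12 k A (e i1) (e i2) * extι k A (e i1) (e i2) w *
          ext21 k A (e i1) (e i2)) = 0 ∧
      TrOf E2 (ext12 k A (e i1) (e i2) * extι k A (e i1) (e i2) w *
          ext21 k A (e i1) (e i2)) =
        ((ext12 k A (e i1) (e i2) * extι k A (e i1) (e i2) w *
            ext21 k A (e i1) (e i2)) * extι k A (e i1) (e i2) (e i1)) ⊗ₜ[k]
          (extι k A (e i1) (e i2) (e i1))
          - (extι k A (e i1) (e i2) (e i1)) ⊗ₜ[k]
            (extι k A (e i1) (e i2) (e i1) *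
              (ext12 k A (e i1) (e i2) * extι k A (e i1) (e i2) w *
                ext21 k A (e i1) (e i2)))) ∧
    (∀ a : ExtAlg k A (e i1) (e i2), InCorner a →
      TrOf E1 a + TrOf E2 a =
        (a * extι k A (e i1) (e i2) (e i1)) ⊗ₜ[k] (extι k A (e i1) (e i2) (e i1))
          - (extι k A (e i1) (e i2) (e i1)) ⊗ₜ[k]
            (extι k A (e i1) (e i2) (e i1) * a)) := by
  have he2 : e i2 * e i2 = e i2 := by simpa using horth i2 i2
  have h12' : e i1 * e i2 = 0 := by simpa [if_neg h12] using horth i1 i2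
  have h21' : e i2 * e i1 = 0 := by
    simpa [if_neg (Ne.symm h12)] using horth i2 i1
  have hom : (1 - e i2) * e i2 = 0 := by rw [sub_mul, one_mul, he2, sub_self]
  have hmo : e i2 * (1 - e i2) = 0 := by rw [mul_sub, mul_one, he2, sub_self]
  refine ⟨?_, ?_, ?_, ?_, ?_⟩
  · intro t ht
    have ht2 : t * e i2 = 0 := by
      conv_lhs => rw [← ht]
      rw [mul_assoc ((1 - e i2) * t), hom, mul_zero]
    have h2t : e i2 * t = 0 := by
      conv_lhs => rw [← ht]
      rw [← mul_assoc, ← mul_assoc, hmo, zero_mul, zero_mul]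
    refine ⟨trE1_on_ι h12' h21' hE1 t, ?_⟩
    rw [trE2_on_ι h12' h21' he2 hE2 t]
    have a1 : extι k A (e i1) (e i2) t * ext21 k A (e i1) (e i2) = 0 := by
      rw [← fus_r5, ← mul_assoc, extι_mul', ht2, map_zero, zero_mul]
    have a2 : ext12 k A (e i1) (e i2) * extι k A (e i1) (e i2) t = 0 := by
      rw [← fus_r4, mul_assoc, extι_mul', h2t, map_zero, mul_zero]
    rw [a1, a2, zero_tmul, tmul_zero, tens_sub_zero]
  · intro u hu
    have h2u : e i2 * u = u := by
      conv_lhs => rw [← hu]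
      rw [← mul_assoc, ← mul_assoc, he2, hu]
    have hu2 : u * e i2 = 0 := by
      conv_lhs => rw [← hu]
      rw [mul_assoc (e i2 * u), hom, mul_zero]
    exact ⟨trE1_on_12ι h12' h21' hE1 u, trE2_on_12ι h12' h21' hE2 u hu2 h2u⟩
  · intro v hv
    have hv2 : v * e i2 = v := by
      conv_lhs => rw [← hv]
      rw [mul_assoc ((1 - e i2) * v), he2, hv]
    have h2v : e i2 * v = 0 := by
      conv_lhs => rw [← hv]
      rw [← mul_assoc, ← mul_assoc, hmo, zero_mul, zero_mul]
    exact ⟨trE1_on_ι21 h12' h21' hE1 v, trE2_on_ι21 h12' h21' hE2 v hv2 h2v⟩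
  · intro w hw
    have hw2 : w * e i2 = w := by
      conv_lhs => rw [← hw]
      rw [mul_assoc (e i2 * w), he2, hw]
    have h2w : e i2 * w = w := by
      conv_lhs => rw [← hw]
      rw [← mul_assoc, ← mul_assoc, he2, hw]
    have hw1 : w * e i1 = 0 := by
      conv_lhs => rw [← hw]
      rw [mul_assoc (e i2 * w), h21', mul_zero]
    exact ⟨trE1_on_12ι21 h12' h21' hE1 w hw1,
      trE2_on_12ι21 h12' h21' hE2 w hw2 h2w⟩
  · intro a hcorner
    have hc : extEps k A (e i1) (e i2) * a * extEps k A (e i1) (e i2) = a :=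
      hcorner
    have aE21 : a * ext21 k A (e i1) (e i2) = 0 := by
      rw [← hc, mul_assoc (extEps k A (e i1) (e i2) * a), fus_eps_e21,
        mul_zero]
    have E12a : ext12 k A (e i1) (e i2) * a = 0 := by
      rw [← hc, ← mul_assoc, ← mul_assoc, fus_e12_eps, zero_mul, zero_mul]
    rw [tr_sum_global h12' h21' he2 hE1 hE2 a, aE21, E12a, zero_tmul,
      tmul_zero, add_zero, tens_sub_zero]
end

section
/- Let n ≥ 2, let A be a B-algebra with a B-linear n-bracket ⟪-,…,-⟫ and A' a B'-algebra with a B'-linear n-bracket ⟪-,…,-⟫'. Then there exists a unique (B⊕B')-linear n-bracket ⟪-,…,-⟫^⊕ on the direct sum algebra A ⊕ A' extending the n-brackets of A and A' (via the inclusions of A and A' into A⊕A') and satisfying ⟪c₁,…,cₙ⟫^⊕ = 0 whenever there exist i ≠ j with c_i = (a,0) and c_j = (0,b); explicitly, ⟪(a₁,b₁),…,(aₙ,bₙ)⟫^⊕ = ι^{⊗n}(⟪a₁,…,aₙ⟫) + (ι')^{⊗n}(⟪b₁,…,bₙ⟫'), where ι, ι' are the inclusions of A and A' into A⊕A'. 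-/
open TensorProduct

/-- A `B`-linear `n`-bracket on a `k`-algebra `A` (Van den Bergh): a `k`-multilinear map
`A^×n → A^⊗n` vanishing when an argument lies in `B`, cyclically antisymmetric
(with sign `(−1)^{n+1}`), and a derivation in its last argument for the outer
`A`-bimodule structure on `A^⊗n`. -/
structure NBracket (k : Type*) [Field k] (A : Type*) [Ring A] [Algebra k A]
    (n : ℕ) (hn : 0 < n) (B : Subalgebra k A) where
  br : MultilinearMap k (fun _ : Fin n => A) (PiTensorProduct k (fun _ : Fin n => A))
  blin : ∀ (v : Fin n → A) (i : Fin n), v i ∈ B → br v = 0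
  cyclic : ∀ v : Fin n → A,
    br (fun i => v ((finRotate n).symm i)) =
      ((-1 : ℤ) ^ (n + 1)) •
        (PiTensorProduct.reindex k (fun _ : Fin n => A) (finRotate n)) (br v)
  deriv : ∀ (v : Fin n → A) (b c : A),
    br (Function.update v ⟨n - 1, Nat.sub_lt hn Nat.one_pos⟩ (b * c)) =
      PiTensorProduct.map (Function.update
          (fun _ : Fin n => (LinearMap.id : A →ₗ[k] A))
          ⟨n - 1, Nat.sub_lt hn Nat.one_pos⟩ (LinearMap.mulRight k c))
        (br (Function.update v ⟨n - 1, Nat.sub_lt hn Nat.one_pos⟩ b))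
      + PiTensorProduct.map (Function.update
          (fun _ : Fin n => (LinearMap.id : A →ₗ[k] A))
          ⟨0, hn⟩ (LinearMap.mulLeft k b))
        (br (Function.update v ⟨n - 1, Nat.sub_lt hn Nat.one_pos⟩ c))

section Aux

variable {k : Type*} [Field k] {A : Type*} [Ring A] [Algebra k A]
  {A' : Type*} [Ring A'] [Algebra k A'] {n : ℕ} {hn : 0 < n}
  {B : Subalgebra k A} {B' : Subalgebra k A'}

/-- push a map-update through `map (fun _ => φ)` when `L ∘ φ = φ ∘ L'`. -/
lemma map_update_comm {ι : Type*} [DecidableEq ι] [Fintype ι]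
    {M N : Type*} [Ring M] [Algebra k M] [Ring N] [Algebra k N]
    (φ : M →ₗ[k] N) (L : N →ₗ[k] N) (L' : M →ₗ[k] M)
    (hL : L ∘ₗ φ = φ ∘ₗ L') (i : ι) (x : PiTensorProduct k (fun _ : ι => M)) :
    PiTensorProduct.map
        (Function.update (fun _ : ι => (LinearMap.id : N →ₗ[k] N)) i L)
        (PiTensorProduct.map (fun _ : ι => φ) x)
      = PiTensorProduct.map (fun _ : ι => φ)
          (PiTensorProduct.map
            (Function.update (fun _ : ι => (LinearMap.id : M →ₗ[k] M)) i L') x) := by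
  rw [← LinearMap.comp_apply, ← LinearMap.comp_apply, ← PiTensorProduct.map_comp,
    ← PiTensorProduct.map_comp]
  have heq : (fun j => Function.update (fun _ : ι => (LinearMap.id : N →ₗ[k] N)) i L j ∘ₗ φ)
      = fun j => φ ∘ₗ Function.update (fun _ : ι => (LinearMap.id : M →ₗ[k] M)) i L' j := by
    funext j
    by_cases h : j = i
    · subst h; simp [hL]
    · simp [Function.update_of_ne h]
  rw [heq]

/-- The multilinear map underlying the direct-sum bracket. -/
noncomputable def sumBr (D : NBracket k A n hn B) (D' : NBracket k A' n hn B') :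
    MultilinearMap k (fun _ : Fin n => A × A')
      (PiTensorProduct k fun _ : Fin n => A × A') :=
  ((PiTensorProduct.map fun _ : Fin n => LinearMap.inl k A A').compMultilinearMap
      (D.br.compLinearMap fun _ => LinearMap.fst k A A'))
    + ((PiTensorProduct.map fun _ : Fin n => LinearMap.inr k A A').compMultilinearMap
      (D'.br.compLinearMap fun _ => LinearMap.snd k A A'))

lemma sumBr_apply (D : NBracket k A n hn B) (D' : NBracket k A' n hn B')
    (v : Fin n → A × A') :
    sumBr D D' v =
      PiTensorProduct.map (fun _ : Fin n => LinearMap.inl k A A')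
        (D.br fun i => (v i).1)
      + PiTensorProduct.map (fun _ : Fin n => LinearMap.inr k A A')
        (D'.br fun i => (v i).2) := rfl

lemma nbracket_ext {E F : NBracket k A n hn B} (h : E.br = F.br) : E = F := by
  cases E with
  | mk b1 p1 p2 p3 =>
    cases F with
    | mk b2 q1 q2 q3 =>
      obtain rfl : b1 = b2 := h
      rfl

/-- The direct-sum bracket. -/
noncomputable def sumNB (D : NBracket k A n hn B) (D' : NBracket k A' n hn B') :
    NBracket k (A × A') n hn (B.prod B') where
  br := sumBr D D'
  blin := by
    intro v i hi
    rw [Subalgebra.mem_prod] at hi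
    rw [sumBr_apply, D.blin _ i hi.1, D'.blin _ i hi.2]
    simp
  cyclic := by
    intro v
    have h1 := D.cyclic (fun i => (v i).1)
    have h2 := D'.cyclic (fun i => (v i).2)
    have h3 : ∀ x, PiTensorProduct.map (fun _ : Fin n => LinearMap.inl k A A')
        (PiTensorProduct.reindex k (fun _ : Fin n => A) (finRotate n) x)
        = PiTensorProduct.reindex k (fun _ : Fin n => A × A') (finRotate n)
          (PiTensorProduct.map (fun _ : Fin n => LinearMap.inl k A A') x) :=
      fun x => PiTensorProduct.map_reindex (fun _ : Fin n => LinearMap.inl k A A')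
        (finRotate n) x
    have h4 : ∀ x, PiTensorProduct.map (fun _ : Fin n => LinearMap.inr k A A')
        (PiTensorProduct.reindex k (fun _ : Fin n => A') (finRotate n) x)
        = PiTensorProduct.reindex k (fun _ : Fin n => A × A') (finRotate n)
          (PiTensorProduct.map (fun _ : Fin n => LinearMap.inr k A A') x) :=
      fun x => PiTensorProduct.map_reindex (fun _ : Fin n => LinearMap.inr k A A')
        (finRotate n) x
    calc sumBr D D' (fun i => v ((finRotate n).symm i))
        = PiTensorProduct.map (fun _ : Fin n => LinearMap.inl k A A')
            (D.br fun i => ((fun j => (v j).1) ((finRotate n).symm i)))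
          + PiTensorProduct.map (fun _ : Fin n => LinearMap.inr k A A')
            (D'.br fun i => ((fun j => (v j).2) ((finRotate n).symm i))) := rfl
      _ = _ := by
          rw [h1, h2, map_zsmul, map_zsmul, h3, h4, sumBr_apply, map_add]
          generalize (PiTensorProduct.reindex k (fun _ : Fin n => A × A') (finRotate n))
            ((PiTensorProduct.map fun _ : Fin n => LinearMap.inl k A A')
              (D.br fun i => (v i).1)) = x
          generalize (PiTensorProduct.reindex k (fun _ : Fin n => A × A') (finRotate n))
            ((PiTensorProduct.map fun _ : Fin n => LinearMap.inr k A A')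
              (D'.br fun i => (v i).2)) = y
          exact (zsmul_add x y ((-1:ℤ)^(n+1))).symm
  deriv := by
    intro v b c
    set i0 : Fin n := ⟨n - 1, Nat.sub_lt hn Nat.one_pos⟩ with hi0
    set j0 : Fin n := ⟨0, hn⟩ with hj0
    have eFst : ∀ (x : A × A'),
        (fun i => (Function.update v i0 x i).1)
          = Function.update (fun i => (v i).1) i0 x.1 := by
      intro x; funext j
      by_cases h : j = i0
      · subst h; simp
      · simp [Function.update_of_ne h]
    have eSnd : ∀ (x : A × A'),
        (fun i => (Function.update v i0 x i).2)
          = Function.update (fun i => (v i).2) i0 x.2 := by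
      intro x; funext j
      by_cases h : j = i0
      · subst h; simp
      · simp [Function.update_of_ne h]
    have hRl : LinearMap.mulRight k c ∘ₗ LinearMap.inl k A A'
        = LinearMap.inl k A A' ∘ₗ LinearMap.mulRight k c.1 := by
      ext x <;> simp [LinearMap.mulRight_apply, Prod.mul_def]
    have hRr : LinearMap.mulRight k c ∘ₗ LinearMap.inr k A A'
        = LinearMap.inr k A A' ∘ₗ LinearMap.mulRight k c.2 := by
      ext x <;> simp [LinearMap.mulRight_apply, Prod.mul_def]
    have hLl : LinearMap.mulLeft k b ∘ₗ LinearMap.inl k A A'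
        = LinearMap.inl k A A' ∘ₗ LinearMap.mulLeft k b.1 := by
      ext x <;> simp [LinearMap.mulLeft_apply, Prod.mul_def]
    have hLr : LinearMap.mulLeft k b ∘ₗ LinearMap.inr k A A'
        = LinearMap.inr k A A' ∘ₗ LinearMap.mulLeft k b.2 := by
      ext x <;> simp [LinearMap.mulLeft_apply, Prod.mul_def]
    rw [sumBr_apply, sumBr_apply, sumBr_apply, eFst, eSnd, eFst, eSnd, eFst, eSnd,
      Prod.fst_mul, Prod.snd_mul, D.deriv, D'.deriv, map_add, map_add, map_add, map_add,
      map_update_comm _ _ _ hRl i0, map_update_comm _ _ _ hRr i0,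
      map_update_comm _ _ _ hLl j0, map_update_comm _ _ _ hLr j0]
    abel

end Aux

/-- Given `B`- and `B'`-linear `n`-brackets on `A` and `A'`, there is
a unique `(B⊕B')`-linear `n`-bracket on `A ⊕ A'` extending both and vanishing on mixed
arguments; it is given by the explicit componentwise formula. -/
theorem statement18 (k : Type*) [Field k] [CharZero k]
    (A : Type*) [Ring A] [Algebra k A] (A' : Type*) [Ring A'] [Algebra k A']
    (B : Subalgebra k A) (B' : Subalgebra k A')
    (n : ℕ) (hn : 0 < n) (hn2 : 2 ≤ n)
    (D : NBracket k A n hn B) (D' : NBracket k A' n hn B') :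
    (∃! Dsum : NBracket k (A × A') n hn (B.prod B'),
      (∀ v : Fin n → A, Dsum.br (fun i => ((v i, 0) : A × A')) =
        PiTensorProduct.map (fun _ : Fin n => LinearMap.inl k A A') (D.br v)) ∧
      (∀ v : Fin n → A', Dsum.br (fun i => ((0, v i) : A × A')) =
        PiTensorProduct.map (fun _ : Fin n => LinearMap.inr k A A') (D'.br v)) ∧
      (∀ v : Fin n → A × A',
        (∃ i j : Fin n, i ≠ j ∧ (v i).2 = 0 ∧ (v j).1 = 0) → Dsum.br v = 0)) ∧
    (∀ Dsum : NBracket k (A × A') n hn (B.prod B'),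
      ((∀ v : Fin n → A, Dsum.br (fun i => ((v i, 0) : A × A')) =
        PiTensorProduct.map (fun _ : Fin n => LinearMap.inl k A A') (D.br v)) ∧
      (∀ v : Fin n → A', Dsum.br (fun i => ((0, v i) : A × A')) =
        PiTensorProduct.map (fun _ : Fin n => LinearMap.inr k A A') (D'.br v)) ∧
      (∀ v : Fin n → A × A',
        (∃ i j : Fin n, i ≠ j ∧ (v i).2 = 0 ∧ (v j).1 = 0) → Dsum.br v = 0)) →
      ∀ v : Fin n → A × A',
        Dsum.br v =
          PiTensorProduct.map (fun _ : Fin n => LinearMap.inl k A A')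
            (D.br fun i => (v i).1)
          + PiTensorProduct.map (fun _ : Fin n => LinearMap.inr k A A')
            (D'.br fun i => (v i).2)) := by
  -- the conditions satisfied by the constructed bracket
  have hcond1 : ∀ v : Fin n → A, (sumNB D D').br (fun i => ((v i, 0) : A × A')) =
      PiTensorProduct.map (fun _ : Fin n => LinearMap.inl k A A') (D.br v) := by
    intro v
    show sumBr D D' _ = _
    rw [sumBr_apply]
    have : D'.br (fun i => (((v i, (0:A')) : A × A')).2) = 0 :=
      D'.br.map_coord_zero ⟨0, hn⟩ rfl
    rw [this, map_zero, add_zero]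
  have hcond2 : ∀ v : Fin n → A', (sumNB D D').br (fun i => ((0, v i) : A × A')) =
      PiTensorProduct.map (fun _ : Fin n => LinearMap.inr k A A') (D'.br v) := by
    intro v
    show sumBr D D' _ = _
    rw [sumBr_apply]
    have : D.br (fun i => ((((0:A), v i) : A × A')).1) = 0 :=
      D.br.map_coord_zero ⟨0, hn⟩ rfl
    rw [this, map_zero, zero_add]
  have hcond3 : ∀ v : Fin n → A × A',
      (∃ i j : Fin n, i ≠ j ∧ (v i).2 = 0 ∧ (v j).1 = 0) → (sumNB D D').br v = 0 := by
    rintro v ⟨i, j, hij, h2, h1⟩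
    show sumBr D D' v = 0
    rw [sumBr_apply, D.br.map_coord_zero j h1, D'.br.map_coord_zero i h2]
    simp
  -- uniqueness formula
  have key : ∀ Dsum : NBracket k (A × A') n hn (B.prod B'),
      ((∀ v : Fin n → A, Dsum.br (fun i => ((v i, 0) : A × A')) =
        PiTensorProduct.map (fun _ : Fin n => LinearMap.inl k A A') (D.br v)) ∧
      (∀ v : Fin n → A', Dsum.br (fun i => ((0, v i) : A × A')) =
        PiTensorProduct.map (fun _ : Fin n => LinearMap.inr k A A') (D'.br v)) ∧
      (∀ v : Fin n → A × A',
        (∃ i j : Fin n, i ≠ j ∧ (v i).2 = 0 ∧ (v j).1 = 0) → Dsum.br v = 0)) →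
      ∀ v : Fin n → A × A',
        Dsum.br v =
          PiTensorProduct.map (fun _ : Fin n => LinearMap.inl k A A')
            (D.br fun i => (v i).1)
          + PiTensorProduct.map (fun _ : Fin n => LinearMap.inr k A A')
            (D'.br fun i => (v i).2) := by
    rintro Dsum ⟨h1, h2, h3⟩ v
    set a : Fin n → A × A' := fun i => ((v i).1, 0) with ha
    set b : Fin n → A × A' := fun i => (0, (v i).2) with hb
    have hv : v = a + b := by
      funext i; ext <;> simp [ha, hb]
    have hsum := Dsum.br.map_add_univ a b
    rw [hv, hsum]
    have hzero : ∀ s : Finset (Fin n), s ∈ Finset.univ →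
        s ∉ ({Finset.univ, ∅} : Finset (Finset (Fin n))) →
        Dsum.br (s.piecewise a b) = 0 := by
      intro s _ hs
      simp only [Finset.mem_insert, Finset.mem_singleton] at hs
      push_neg at hs
      obtain ⟨hsu, hse⟩ := hs
      obtain ⟨i, hi⟩ := hse
      obtain ⟨j, hj⟩ : ∃ j, j ∉ s := by
        by_contra h
        push_neg at h
        exact hsu (Finset.eq_univ_iff_forall.2 h)
      refine h3 _ ⟨i, j, ?_, ?_, ?_⟩
      · rintro rfl; exact hj hi
      · simp [Finset.piecewise_eq_of_mem _ _ _ hi, ha]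
      · simp [Finset.piecewise_eq_of_notMem _ _ _ hj, hb]
    have hpair : (∑ s : Finset (Fin n), Dsum.br (s.piecewise a b))
        = ∑ s ∈ ({Finset.univ, ∅} : Finset (Finset (Fin n))),
            Dsum.br (s.piecewise a b) :=
      (Finset.sum_subset (Finset.subset_univ _) hzero).symm
    have hne : (Finset.univ : Finset (Fin n)) ≠ ∅ := by
      have : (⟨0, hn⟩ : Fin n) ∈ (Finset.univ : Finset (Fin n)) := Finset.mem_univ _
      intro h; rw [h] at this; exact absurd this (Finset.notMem_empty _)
    rw [hpair, Finset.sum_pair hne, Finset.piecewise_univ, Finset.piecewise_empty]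
    rw [h1 (fun i => (v i).1), h2 (fun i => (v i).2), ← hv]
  refine ⟨⟨sumNB D D', ⟨hcond1, hcond2, hcond3⟩, ?_⟩, key⟩
  intro E hE
  have hbr : E.br = (sumNB D D').br := by
    apply MultilinearMap.ext
    intro v
    rw [key E hE v, ← key (sumNB D D') ⟨hcond1, hcond2, hcond3⟩ v]
  exact nbracket_ext hbr
end
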